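/- H-inductive sentences persist in prime products: if φ is an h-inductive sentence and ∏_{x∈X} M_x / F is a prime product with M_x ⊨ φ for every x ∈ X, then ∏_{x∈X} M_x / F ⊨ φ. -/

import Mathlib

namespace PosLogic

open FirstOrder FirstOrder.Language FirstOrder.Language.Structure Set

universe u v w x y z

variable {L : FirstOrder.Language.{u, v}}

/-- Positive formulas: built from atomic formulas and `⊥` using `∧`, `∨` and `∃`. -/
inductive PosFormula (L : FirstOrder.Language.{u, v}) (α : Type y) : ℕ → Type (max u v y)
  | falsum {n : ℕ} : PosFormula L α n
  | equal {n : ℕ} (t₁ t₂ : L.Term (α ⊕ Fin n)) : PosFormula L α n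
  | rel {n l : ℕ} (R : L.Relations l) (ts : Fin l → L.Term (α ⊕ Fin n)) : PosFormula L α n
  | and {n : ℕ} (φ ψ : PosFormula L α n) : PosFormula L α n
  | or {n : ℕ} (φ ψ : PosFormula L α n) : PosFormula L α n
  | ex {n : ℕ} (φ : PosFormula L α (n + 1)) : PosFormula L α n

variable {α : Type y}

/-- Realization (satisfaction) of a positive formula. -/
def PosFormula.Realize {M : Type w} [L.Structure M] :
    ∀ {n : ℕ}, PosFormula L α n → (α → M) → (Fin n → M) → Prop
  | _, .falsum, _, _ => False
  | _, .equal t₁ t₂, v, xs => t₁.realize (Sum.elim v xs) = t₂.realize (Sum.elim v xs)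
  | _, .rel R ts, v, xs => RelMap R fun i => (ts i).realize (Sum.elim v xs)
  | _, .and φ ψ, v, xs => φ.Realize v xs ∧ ψ.Realize v xs
  | _, .or φ ψ, v, xs => φ.Realize v xs ∨ ψ.Realize v xs
  | _, .ex φ, v, xs => ∃ a, φ.Realize v (Fin.snoc xs a)

/-- Positive sentences. -/
abbrev PosSentence (L : FirstOrder.Language.{u, v}) : Type (max u v) := PosFormula L Empty 0

/-- A positive sentence holds in a structure. -/
def PosSentence.Realize (M : Type w) [L.Structure M] (φ : PosSentence L) : Prop :=
  PosFormula.Realize (M := M) φ Empty.elim (fun i => i.elim0)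

/-- Two structures are positively equivalent when they satisfy the same positive sentences. -/
def PosEquivalent (M : Type w) (N : Type x) [L.Structure M] [L.Structure N] : Prop :=
  ∀ φ : PosSentence L, PosSentence.Realize M φ ↔ PosSentence.Realize N φ

/-- A filter over a poset: a nonempty collection of upsets, upward closed among upsets and
closed under binary intersections. -/
structure PosetFilter (X : Type x) [Preorder X] where
  sets : Set (Set X)
  upper' : ∀ V ∈ sets, IsUpperSet V
  nonempty' : sets.Nonempty
  mono' : ∀ V ∈ sets, ∀ W : Set X, IsUpperSet W → V ⊆ W → W ∈ sets
  inter' : ∀ V ∈ sets, ∀ W ∈ sets, V ∩ W ∈ sets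

/-- A prime filter over a poset. -/
def PosetFilter.Prime {X : Type x} [Preorder X] (F : PosetFilter X) : Prop :=
  ∅ ∉ F.sets ∧ ∀ V W : Set X, IsUpperSet V → IsUpperSet W →
    V ∪ W ∈ F.sets → V ∈ F.sets ∨ W ∈ F.sets

/-- Predicate version: `S` is a filter over the poset `X`. -/
def IsPosetFilter {X : Type x} [Preorder X] (S : Set (Set X)) : Prop :=
  (∀ V ∈ S, IsUpperSet V) ∧ S.Nonempty ∧
    (∀ V ∈ S, ∀ W : Set X, IsUpperSet W → V ⊆ W → W ∈ S) ∧
    (∀ V ∈ S, ∀ W ∈ S, V ∩ W ∈ S)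

/-- Predicate version: `S` is a prime filter over the poset `X`. -/
def IsPrimePosetFilter {X : Type x} [Preorder X] (S : Set (Set X)) : Prop :=
  IsPosetFilter S ∧ ∅ ∉ S ∧ ∀ V W : Set X, IsUpperSet V → IsUpperSet W →
    V ∪ W ∈ S → V ∈ S ∨ W ∈ S

/-- A wellfounded forest: a poset whose principal downsets are well ordered. -/
def IsWellFoundedForest (X : Type x) [Preorder X] : Prop :=
  ∀ a : X, IsWellOrder (Set.Iic a) (· < ·)

/-- An ordered system of structures indexed by a poset. -/
structure OrderedSystem (L : FirstOrder.Language.{u, v}) (X : Type x) [Preorder X]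
    (M : X → Type w) [∀ a, L.Structure (M a)] where
  hom : ∀ ⦃a b : X⦄, a ≤ b → M a →[L] M b
  hom_id : ∀ (a : X) (m : M a), hom (le_refl a) m = m
  hom_comp : ∀ ⦃a b c : X⦄ (hab : a ≤ b) (hbc : b ≤ c) (m : M a),
    hom hbc (hom hab m) = hom (hab.trans hbc) m

variable {X : Type x} [PartialOrder X] {M : X → Type w} [∀ a, L.Structure (M a)]

/-- A compatible family in `S_F`: an element of `S_V` for some `V ∈ F`. -/
structure CompFam (D : OrderedSystem L X M) (F : PosetFilter X) where
  dom : Set X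
  dom_mem : dom ∈ F.sets
  val : ∀ a ∈ dom, M a
  compat : ∀ ⦃b c : X⦄ (hb : b ∈ dom) (hc : c ∈ dom) (hbc : b ≤ c),
    D.hom hbc (val b hb) = val c hc

variable {D : OrderedSystem L X M} {F : PosetFilter X}

/-- The set `⟦a = b⟧`. -/
def eqSet (a b : CompFam D F) : Set X :=
  {p | ∃ (ha : p ∈ a.dom) (hb : p ∈ b.dom), a.val p ha = b.val p hb}

theorem eqSet_upper (a b : CompFam D F) : IsUpperSet (eqSet a b) := by
  rintro p q hpq ⟨ha, hb, he⟩
  have hap := F.upper' _ a.dom_mem hpq ha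
  have hbp := F.upper' _ b.dom_mem hpq hb
  exact ⟨hap, hbp, by rw [← a.compat ha hap hpq, ← b.compat hb hbp hpq, he]⟩

/-- The relation `≡_F`. -/
instance CompFam.setoid (D : OrderedSystem L X M) (F : PosetFilter X) :
    Setoid (CompFam D F) where
  r a b := eqSet a b ∈ F.sets
  iseqv := by
    constructor
    · intro a
      exact F.mono' _ a.dom_mem _ (eqSet_upper a a) (fun p hp => ⟨hp, hp, rfl⟩)
    · intro a b h
      refine F.mono' _ h _ (eqSet_upper b a) ?_
      rintro p ⟨ha, hb, he⟩
      exact ⟨hb, ha, he.symm⟩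
    · intro a b c hab hbc
      refine F.mono' _ (F.inter' _ hab _ hbc) _ (eqSet_upper a c) ?_
      rintro p ⟨⟨ha, hb, h1⟩, hb', hc, h2⟩
      exact ⟨ha, hc, h1.trans h2⟩

theorem PosetFilter.univ_mem (F : PosetFilter X) : Set.univ ∈ F.sets := by
  obtain ⟨V, hV⟩ := F.nonempty'
  exact F.mono' _ hV _ isUpperSet_univ (Set.subset_univ V)

theorem PosetFilter.iInter_mem (F : PosetFilter X) :
    ∀ {n : ℕ} (s : Fin n → Set X), (∀ i, s i ∈ F.sets) → (⋂ i, s i) ∈ F.sets := by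
  intro n
  induction n with
  | zero =>
    intro s _
    rw [Set.iInter_of_empty]
    exact F.univ_mem
  | succ k ih =>
    intro s hs
    have he : (⋂ i, s i) = s 0 ∩ ⋂ i : Fin k, s i.succ := by
      ext p
      simp only [Set.mem_iInter, Set.mem_inter_iff, Fin.forall_fin_succ]
    rw [he]
    exact F.inter' _ (hs 0) _ (ih _ fun i => hs i.succ)

/-- Pointwise application of a function symbol to compatible families. -/
def CompFam.app {n : ℕ} (g : L.Functions n) (a : Fin n → CompFam D F) : CompFam D F where
  dom := ⋂ i, (a i).dom
  dom_mem := F.iInter_mem _ fun i => (a i).dom_mem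
  val p hp := funMap g fun i => (a i).val p (Set.mem_iInter.1 hp i)
  compat := by
    intro b c hb hc hbc
    rw [Hom.map_fun]
    congr 1
    funext i
    exact (a i).compat _ _ hbc

/-- The set `⟦R(a₁, …, aₙ)⟧`. -/
def relSet {n : ℕ} (R : L.Relations n) (a : Fin n → CompFam D F) : Set X :=
  {p | ∃ h : ∀ i, p ∈ (a i).dom, RelMap R fun i => (a i).val p (h i)}

/-- The set `⟦φ(a₁, …, aₙ)⟧` for a positive formula `φ`. -/
def posSet {n : ℕ} (φ : PosFormula L Empty n) (a : Fin n → CompFam D F) : Set X :=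
  {p | ∃ h : ∀ i, p ∈ (a i).dom,
    PosFormula.Realize φ Empty.elim fun i => (a i).val p (h i)}

/-- The filter product of an ordered system with respect to a filter over the index poset. -/
def FilterProd (D : OrderedSystem L X M) (F : PosetFilter X) : Type (max x w) :=
  Quotient (CompFam.setoid D F)

noncomputable instance FilterProd.structure : L.Structure (FilterProd D F) where
  funMap {n} g v :=
    Quotient.mk (CompFam.setoid D F) (CompFam.app g fun i => (v i).out)
  RelMap {n} R v :=
    ∃ a : Fin n → CompFam D F,
      (∀ i, Quotient.mk (CompFam.setoid D F) (a i) = v i) ∧ relSet R a ∈ F.sets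

/-- `(N, g)` is a direct limit (colimit) cocone of the ordered system `D`. -/
structure IsDirectLimitCocone {X : Type x} [Preorder X] {M : X → Type w}
    [∀ a, L.Structure (M a)] (D : OrderedSystem L X M)
    (N : Type z) [L.Structure N] (g : ∀ a, M a →[L] N) : Prop where
  compat : ∀ ⦃a b : X⦄ (hab : a ≤ b) (m : M a), g b (D.hom hab m) = g a m
  universal : ∀ (P : Type (max x w z)) [L.Structure P] (h : ∀ a, M a →[L] P),
    (∀ ⦃a b : X⦄ (hab : a ≤ b) (m : M a), h b (D.hom hab m) = h a m) →
    ∃! k : N →[L] P, ∀ (a : X) (m : M a), k (g a m) = h a m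

/-- A chain of structures: an ordered system indexed by a nonempty well ordered poset. -/
structure ChainSystem (L : FirstOrder.Language.{u, v}) where
  X : Type w
  [lo : LinearOrder X]
  [ne : Nonempty X]
  wf : WellFoundedLT X
  Mi : X → Type w
  [str : ∀ a, L.Structure (Mi a)]
  sys : OrderedSystem L X Mi

attribute [instance] ChainSystem.lo ChainSystem.ne ChainSystem.str

/-- An ordered system indexed by a wellfounded forest, together with a prime filter. -/
structure PrimeSystem (L : FirstOrder.Language.{u, v}) where
  X : Type w
  [po : PartialOrder X]
  forest : IsWellFoundedForest X
  Mi : X → Type w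
  [str : ∀ a, L.Structure (Mi a)]
  sys : OrderedSystem L X Mi
  F : PosetFilter X
  prime : F.Prime

attribute [instance] PrimeSystem.po PrimeSystem.str

/-- The ultrapower `M^ι/u`. -/
def Ultrapower (M : Type w) (ι : Type z) (u : Ultrafilter ι) :
    Type (max w z) :=
  (↑u : Filter ι).Product fun _ => M

noncomputable instance Ultrapower.structure (M : Type w) [L.Structure M] (ι : Type z)
    (u : Ultrafilter ι) : L.Structure (Ultrapower M ι u) :=
  inferInstanceAs (L.Structure ((↑u : Filter ι).Product fun _ => M))

/-- A prime power of the structure `N`: a prime product of an ordered system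
all of whose structures are `N`. -/
structure PrimePowerOf (L : FirstOrder.Language.{u, v}) (N : Type w) [L.Structure N] where
  X : Type x
  [po : PartialOrder X]
  forest : IsWellFoundedForest X
  sys : OrderedSystem L X fun _ => N
  F : PosetFilter X
  prime : F.Prime

attribute [instance] PrimePowerOf.po

/-- The carrier of a prime power. -/
def PrimePowerOf.carrier {N : Type w} [L.Structure N] (p : PrimePowerOf L N) :
    Type (max x w) :=
  FilterProd p.sys p.F

noncomputable instance {N : Type w} [L.Structure N] (p : PrimePowerOf L N) :
    L.Structure p.carrier :=
  inferInstanceAs (L.Structure (FilterProd p.sys p.F))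

/-- Basic h-inductive sentences: universal closures of implications between
positive formulas. -/
structure BasicHInd (L : FirstOrder.Language.{u, v}) : Type (max u v) where
  n : ℕ
  lhs : PosFormula L Empty n
  rhs : PosFormula L Empty n

/-- Satisfaction of a basic h-inductive sentence. -/
def BasicHInd.Realize (φ : BasicHInd L) (M : Type w) [L.Structure M] : Prop :=
  ∀ xs : Fin φ.n → M, φ.lhs.Realize Empty.elim xs → φ.rhs.Realize Empty.elim xs

/-- Satisfaction of an h-inductive theory (a set of h-inductive sentences). -/
def ModelsHInd (M : Type w) [L.Structure M] (T : Set (BasicHInd L)) : Prop :=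
  ∀ φ ∈ T, φ.Realize M

/-- An immersion: a map preserving and reflecting all positive formulas. -/
def IsImmersion {M : Type w} {N : Type x} [L.Structure M] [L.Structure N]
    (f : N → M) : Prop :=
  ∀ {n : ℕ} (φ : PosFormula L Empty n) (xs : Fin n → N),
    PosFormula.Realize φ Empty.elim xs ↔ PosFormula.Realize φ Empty.elim (f ∘ xs)

/-- A positively existentially closed model of an h-inductive theory `T`. -/
def IsPec (T : Set (BasicHInd L)) (M : Type w) [L.Structure M] : Prop :=
  ModelsHInd M T ∧ ∀ (P : Type w) [L.Structure P], ModelsHInd P T →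
    ∀ f : M →[L] P, IsImmersion (L := L) (⇑f : M → P)

/-- Positive `κ`-saturation. -/
def PositivelySaturatedAt (M : Type w) [L.Structure M] (κ : Cardinal.{w}) : Prop :=
  ∀ (γ : Type w) (vp : γ → M), Cardinal.mk γ < κ →
    ∀ (n : ℕ) (p : Set (PosFormula L γ n)),
      (∀ s : Finset (PosFormula L γ n), ↑s ⊆ p →
        ∃ xs : Fin n → M, ∀ φ ∈ s, PosFormula.Realize φ vp xs) →
      ∃ xs : Fin n → M, ∀ φ ∈ p, PosFormula.Realize φ vp xs

/-- Positive saturation: positive `|M|`-saturation. -/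
def PositivelySaturated (M : Type w) [L.Structure M] : Prop :=
  PositivelySaturatedAt (L := L) M (Cardinal.mk M)


/-! ### Auxiliary lemmas for stmt11 -/

theorem PosFormula.realize_hom {M' : Type*} {N' : Type*} [L.Structure M'] [L.Structure N']
    (g : M' →[L] N') : ∀ {n : ℕ} (φ : PosFormula L α n) (v : α → M') (xs : Fin n → M'),
    φ.Realize v xs → φ.Realize (⇑g ∘ v) (⇑g ∘ xs)
  | _, .falsum, _, _, h => h
  | _, .equal t₁ t₂, v, xs, h => by
    simp only [PosFormula.Realize, ← Sum.comp_elim, HomClass.realize_term] at *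
    rw [h]
  | _, .rel R ts, v, xs, h => by
    simp only [PosFormula.Realize, ← Sum.comp_elim, HomClass.realize_term] at *
    exact g.map_rel R _ h
  | _, .and φ ψ, v, xs, h =>
    ⟨PosFormula.realize_hom g φ v xs h.1, PosFormula.realize_hom g ψ v xs h.2⟩
  | _, .or φ ψ, v, xs, h =>
    h.elim (fun h' => Or.inl (PosFormula.realize_hom g φ v xs h'))
      (fun h' => Or.inr (PosFormula.realize_hom g ψ v xs h'))
  | _, .ex φ, v, xs, h => by
    obtain ⟨m, hm⟩ := h
    refine ⟨g m, ?_⟩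
    have := PosFormula.realize_hom g φ v (Fin.snoc xs m) hm
    rwa [Fin.comp_snoc] at this

theorem empty_elim_comp {N' P' : Type*} (g : N' → P') :
    g ∘ (Empty.elim : Empty → N') = Empty.elim := funext fun e => e.elim

theorem posSet_upper {n : ℕ} (φ : PosFormula L Empty n) (a : Fin n → CompFam D F) :
    IsUpperSet (posSet φ a) := by
  rintro p q hpq ⟨h, hr⟩
  have h' : ∀ i, q ∈ (a i).dom := fun i => F.upper' _ (a i).dom_mem hpq (h i)
  refine ⟨h', ?_⟩
  have := PosFormula.realize_hom (D.hom hpq) φ Empty.elim _ hr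
  rw [empty_elim_comp] at this
  have e : (fun i => (a i).val q (h' i)) =
      fun i => (D.hom hpq) ((a i).val p (h i)) :=
    funext fun i => ((a i).compat (h i) (h' i) hpq).symm
  rw [e]
  exact this

theorem CompFam.val_congr {c c' : CompFam D F} (h : c = c') (p : X) (hp : p ∈ c.dom) :
    c.val p hp = c'.val p (h ▸ hp) := by subst h; rfl

noncomputable instance : L.Structure (Quotient (CompFam.setoid D F)) :=
  FilterProd.structure

theorem equiv_of_subset {a b : CompFam D F} (V : Set X) (hV : V ∈ F.sets)
    (h : V ⊆ eqSet a b) : (⟦a⟧ : FilterProd D F) = ⟦b⟧ :=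
  Quotient.sound (F.mono' _ hV _ (eqSet_upper a b) h)

theorem mem_of_equiv {a b : CompFam D F} (h : (⟦a⟧ : FilterProd D F) = ⟦b⟧) :
    eqSet a b ∈ F.sets := Quotient.exact h

/-- Pointwise realization of a term. -/
def termFam {n : ℕ} (t : L.Term (Empty ⊕ Fin n)) (a : Fin n → CompFam D F) :
    CompFam D F where
  dom := ⋂ i, (a i).dom
  dom_mem := F.iInter_mem _ fun i => (a i).dom_mem
  val p hp := t.realize (Sum.elim Empty.elim fun i => (a i).val p (Set.mem_iInter.1 hp i))
  compat := by
    intro b c hb hc hbc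
    rw [show (D.hom hbc) (t.realize _) = t.realize ((D.hom hbc) ∘ _) from
      (HomClass.realize_term _).symm]
    congr 1
    funext s
    cases s with
    | inl e => exact e.elim
    | inr i => exact (a i).compat _ _ hbc

theorem app_congr {n : ℕ} (g : L.Functions n) {a b : Fin n → CompFam D F}
    (h : ∀ i, (⟦a i⟧ : FilterProd D F) = ⟦b i⟧) :
    (⟦CompFam.app g a⟧ : FilterProd D F) = ⟦CompFam.app g b⟧ := by
  refine equiv_of_subset (⋂ i, eqSet (a i) (b i))
    (F.iInter_mem _ fun i => mem_of_equiv (h i)) ?_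
  intro p hp
  have hp' := Set.mem_iInter.1 hp
  have ha : p ∈ (CompFam.app g a).dom := Set.mem_iInter.2 fun i => ((hp' i).1)
  have hb : p ∈ (CompFam.app g b).dom := Set.mem_iInter.2 fun i => ((hp' i).2.1)
  refine ⟨ha, hb, ?_⟩
  show Structure.funMap g _ = Structure.funMap g _
  congr 1
  funext i
  exact (hp' i).2.2

theorem realize_term_eq {n : ℕ} (t : L.Term (Empty ⊕ Fin n)) (a : Fin n → CompFam D F) :
    t.realize (Sum.elim Empty.elim fun i => (⟦a i⟧ : FilterProd D F)) = ⟦termFam t a⟧ := by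
  induction t with
  | var s =>
    cases s with
    | inl e => exact e.elim
    | inr i =>
      refine equiv_of_subset (⋂ j, (a j).dom) (F.iInter_mem _ fun j => (a j).dom_mem) ?_
      intro p hp
      exact ⟨Set.mem_iInter.1 hp i, hp, rfl⟩
  | func g ts ih =>
    show Structure.funMap g _ = _
    have h1 : (fun i => Term.realize (Sum.elim Empty.elim fun i => (⟦a i⟧ : FilterProd D F))
        (ts i)) = fun i => (⟦termFam (ts i) a⟧ : FilterProd D F) := funext fun i => ih i
    rw [h1]
    show (⟦CompFam.app g _⟧ : FilterProd D F) = _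
    have h2 : ∀ i, (⟦(Quotient.mk (CompFam.setoid D F) (termFam (ts i) a)).out⟧ :
        FilterProd D F) = ⟦termFam (ts i) a⟧ := fun i => Quotient.out_eq _
    rw [app_congr g h2]
    refine equiv_of_subset (⋂ j, (a j).dom) (F.iInter_mem _ fun j => (a j).dom_mem) ?_
    intro p hp
    have ha : p ∈ (CompFam.app g fun i => termFam (ts i) a).dom :=
      Set.mem_iInter.2 fun _ => hp
    exact ⟨ha, hp, rfl⟩


theorem relSet_upper {l : ℕ} (R : L.Relations l) (a : Fin l → CompFam D F) :
    IsUpperSet (relSet R a) := by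
  rintro p q hpq ⟨h, hr⟩
  have h' : ∀ i, q ∈ (a i).dom := fun i => F.upper' _ (a i).dom_mem hpq (h i)
  refine ⟨h', ?_⟩
  have := (D.hom hpq).map_rel R _ hr
  have e : (fun i => (a i).val q (h' i)) =
      fun i => (D.hom hpq) ((a i).val p (h i)) :=
    funext fun i => ((a i).compat (h i) (h' i) hpq).symm
  rw [e]
  exact this

theorem snoc_val {n : ℕ} (a : Fin n → CompFam D F) (b : CompFam D F) (p : X)
    (h : ∀ i, p ∈ (Fin.snoc (α := fun _ => CompFam D F) a b i).dom) (ha : ∀ i, p ∈ (a i).dom) (hb : p ∈ b.dom) :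
    (fun i => (Fin.snoc (α := fun _ => CompFam D F) a b i).val p (h i)) =
      Fin.snoc (fun i => (a i).val p (ha i)) (b.val p hb) := by
  funext i
  refine Fin.lastCases ?_ (fun j => ?_) i
  · have hr : Fin.snoc (α := fun _ => M p) (fun i => (a i).val p (ha i)) (b.val p hb) (Fin.last n) =
        b.val p hb := by rw [Fin.snoc_last]
    rw [hr]
    exact CompFam.val_congr (Fin.snoc_last (α := fun _ => CompFam D F) b a) p (h (Fin.last n))
  · have hr : Fin.snoc (α := fun _ => M p) (fun i => (a i).val p (ha i)) (b.val p hb) j.castSucc =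
        (a j).val p (ha j) := by rw [Fin.snoc_castSucc]
    rw [hr]
    exact CompFam.val_congr (Fin.snoc_castSucc (α := fun _ => CompFam D F) b a j) p (h j.castSucc)

theorem snoc_dom_left {n : ℕ} {a : Fin n → CompFam D F} {b : CompFam D F} {p : X}
    (h : ∀ i, p ∈ (Fin.snoc (α := fun _ => CompFam D F) a b i).dom) (j : Fin n) : p ∈ (a j).dom := by
  have := h j.castSucc
  rwa [Fin.snoc_castSucc] at this

theorem snoc_dom_right {n : ℕ} {a : Fin n → CompFam D F} {b : CompFam D F} {p : X}
    (h : ∀ i, p ∈ (Fin.snoc (α := fun _ => CompFam D F) a b i).dom) : p ∈ b.dom := by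
  have := h (Fin.last n)
  rwa [Fin.snoc_last] at this

theorem snoc_dom {n : ℕ} {a : Fin n → CompFam D F} {b : CompFam D F} {p : X}
    (ha : ∀ i, p ∈ (a i).dom) (hb : p ∈ b.dom) : ∀ i, p ∈ (Fin.snoc (α := fun _ => CompFam D F) a b i).dom := by
  intro i
  refine Fin.lastCases ?_ (fun j => ?_) i
  · rwa [Fin.snoc_last]
  · rw [Fin.snoc_castSucc]; exact ha j

/-- The existential witness family, built using wellfoundedness of the forest. -/
theorem ex_witness (hX : IsWellFoundedForest X) {n : ℕ} (φ : PosFormula L Empty (n + 1))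
    (a : Fin n → CompFam D F) (hU : posSet (.ex φ) a ∈ F.sets) :
    ∃ b : CompFam D F, posSet φ (Fin.snoc a b) ∈ F.sets := by
  set U := posSet (.ex φ) a with hUdef
  have hUup : IsUpperSet U := posSet_upper _ a
  -- choose pointwise witnesses
  have hw : ∀ q, q ∈ U → ∃ m : M q, ∃ h : ∀ i, q ∈ (a i).dom,
      PosFormula.Realize φ Empty.elim (Fin.snoc (fun i => (a i).val q (h i)) m) := by
    rintro q ⟨h, m, hr⟩
    exact ⟨m, h, hr⟩
  choose w hw' using hw
  -- least point function
  haveI wo : ∀ p : X, IsWellOrder (Set.Iic p) (· < ·) := hX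
  have hne : ∀ p, p ∈ U → {q : Set.Iic p | (q : X) ∈ U}.Nonempty :=
    fun p hp => ⟨⟨p, le_refl p⟩, hp⟩
  let lst : ∀ p : X, p ∈ U → X := fun p hp =>
    ((wo p).toIsWellFounded.wf.min {q : Set.Iic p | (q : X) ∈ U} (hne p hp) : Set.Iic p)
  have lst_le : ∀ p hp, lst p hp ≤ p := fun p hp =>
    ((wo p).toIsWellFounded.wf.min {q : Set.Iic p | (q : X) ∈ U} (hne p hp)).2
  have lst_mem : ∀ p hp, lst p hp ∈ U := fun p hp =>
    (wo p).toIsWellFounded.wf.min_mem {q : Set.Iic p | (q : X) ∈ U} (hne p hp)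
  have lst_least : ∀ p hp (r : X), r ≤ p → r ∈ U → lst p hp ≤ r := by
    intro p hp r hrp hrU
    set S := {q : Set.Iic p | (q : X) ∈ U}
    set m := (wo p).toIsWellFounded.wf.min S (hne p hp)
    have hrS : (⟨r, hrp⟩ : Set.Iic p) ∈ S := hrU
    have hnl : ¬ ((⟨r, hrp⟩ : Set.Iic p) < m) :=
      (wo p).toIsWellFounded.wf.not_lt_min S hrS
    rcases @trichotomous _ (· < ·) (wo p).toTrichotomous m ⟨r, hrp⟩ with h | h | h
    · exact le_of_lt h
    · exact le_of_eq (congrArg Subtype.val h)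
    · exact absurd h hnl
  have lst_const : ∀ p p' (hpp' : p ≤ p') (hp : p ∈ U),
      lst p' (hUup hpp' hp) = lst p hp := by
    intro p p' hpp' hp
    have hp' := hUup hpp' hp
    have h1 : lst p' hp' ≤ lst p hp :=
      lst_least p' hp' _ ((lst_le p hp).trans hpp') (lst_mem p hp)
    have h2 : lst p hp ≤ lst p' hp' :=
      lst_least p hp _ (h1.trans (lst_le p hp)) (lst_mem p' hp')
    exact le_antisymm h1 h2
  -- the witness family
  have key : ∀ (q1 q2 : X) (e : q1 = q2) (h1 : q1 ∈ U) (h2 : q2 ∈ U) (p' : X)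
      (l1 : q1 ≤ p') (l2 : q2 ≤ p'),
      D.hom l1 (w q1 h1) = D.hom l2 (w q2 h2) := by
    intro q1 q2 e; subst e; intro h1 h2 p' l1 l2; rfl
  let b : CompFam D F :=
    { dom := U
      dom_mem := hU
      val := fun p hp => D.hom (lst_le p hp) (w (lst p hp) (lst_mem p hp))
      compat := by
        intro p p' hp hp' hpp'
        rw [D.hom_comp]
        exact key (lst p hp) (lst p' hp') (lst_const p p' hpp' hp).symm (lst_mem p hp)
          (lst_mem p' hp') p' ((lst_le p hp).trans hpp') (lst_le p' hp') }
  refine ⟨b, F.mono' _ hU _ (posSet_upper _ _) ?_⟩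
  intro p hp
  obtain ⟨hq, hr⟩ := hw' (lst p hp) (lst_mem p hp)
  have hle := lst_le p hp
  have ha : ∀ i, p ∈ (a i).dom := fun i => F.upper' _ (a i).dom_mem hle (hq i)
  have hb : p ∈ b.dom := hp
  refine ⟨snoc_dom ha hb, ?_⟩
  rw [snoc_val a b p (snoc_dom ha hb) ha hb]
  have hth := PosFormula.realize_hom (D.hom hle) φ Empty.elim _ hr
  rw [empty_elim_comp, Fin.comp_snoc] at hth
  have e1 : (fun i => (a i).val p (ha i)) =
      ⇑(D.hom hle) ∘ (fun i => (a i).val (lst p hp) (hq i)) :=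
    funext fun i => ((a i).compat (hq i) (ha i) hle).symm
  have e2 : b.val p hb = D.hom hle (w (lst p hp) (lst_mem p hp)) := rfl
  rw [e1, e2]
  exact hth

theorem FilterProd.relMap_def {l : ℕ} (R : L.Relations l) (v : Fin l → FilterProd D F) :
    Structure.RelMap R v ↔ ∃ a : Fin l → CompFam D F,
      (∀ i, (⟦a i⟧ : FilterProd D F) = v i) ∧ relSet R a ∈ F.sets := Iff.rfl

/-- The positive Łoś theorem for prime products. -/
theorem los (hX : IsWellFoundedForest X) (hF : F.Prime) :
    ∀ {n : ℕ} (φ : PosFormula L Empty n) (a : Fin n → CompFam D F),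
      PosFormula.Realize φ Empty.elim (fun i => (⟦a i⟧ : FilterProd D F)) ↔
        posSet φ a ∈ F.sets := by
  intro n φ
  induction φ with
  | falsum =>
    intro a
    simp only [PosFormula.Realize, false_iff]
    intro hmem
    refine hF.1 ?_
    have he : posSet (.falsum : PosFormula L Empty _) a = ∅ := by
      ext p
      constructor
      · intro hp
        obtain ⟨hd2, hfa⟩ := hp
        exact hfa
      · exact False.elim
    rwa [he] at hmem
  | equal t₁ t₂ =>
    intro a
    show Term.realize _ t₁ = Term.realize _ t₂ ↔ _
    rw [realize_term_eq, realize_term_eq]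
    constructor
    · intro h
      refine F.mono' _ (F.inter' _ (mem_of_equiv h) _
        (F.iInter_mem _ fun j => (a j).dom_mem)) _ (posSet_upper _ _) ?_
      rintro p ⟨⟨h1, h2, he⟩, hd⟩
      exact ⟨Set.mem_iInter.1 hd, he⟩
    · intro h
      refine equiv_of_subset _ (F.inter' _ h _ (F.iInter_mem _ fun j => (a j).dom_mem)) ?_
      rintro p ⟨⟨hd, he⟩, hd'⟩
      exact ⟨hd', hd', he⟩
  | rel R ts =>
    intro a
    show Structure.RelMap R _ ↔ _
    have h1 : (fun i => Term.realize (Sum.elim Empty.elim fun i =>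
        (⟦a i⟧ : FilterProd D F)) (ts i)) = fun i => (⟦termFam (ts i) a⟧ : FilterProd D F) :=
      funext fun i => realize_term_eq _ _
    rw [h1]
    refine (FilterProd.relMap_def R _).trans ?_
    constructor
    · rintro ⟨a', ha', hrel⟩
      refine F.mono' _ (F.inter' _ hrel _ (F.inter' _
        (F.iInter_mem _ fun i => mem_of_equiv (ha' i))
        _ (F.iInter_mem _ fun j => (a j).dom_mem))) _ (posSet_upper _ _) ?_
      rintro p ⟨⟨h', hr⟩, heq, hd⟩
      refine ⟨fun j => Set.mem_iInter.1 hd j, ?_⟩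
      have he : (fun i => (ts i).realize (Sum.elim Empty.elim fun j =>
          (a j).val p (Set.mem_iInter.1 hd j))) = fun i => (a' i).val p (h' i) := by
        funext i
        obtain ⟨h1, h2, he⟩ := Set.mem_iInter.1 heq i
        exact he.symm
      exact (congrArg (fun f => Structure.RelMap R f) he).mpr hr
    · intro h
      refine ⟨fun i => termFam (ts i) a, fun i => rfl, ?_⟩
      refine F.mono' _ (F.inter' _ h _ (F.iInter_mem _ fun j => (a j).dom_mem)) _
        (relSet_upper _ _) ?_
      rintro p ⟨⟨hd, hr⟩, hd'⟩
      exact ⟨fun i => hd', hr⟩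
  | and φ ψ ihφ ihψ =>
    intro a
    show (_ ∧ _) ↔ _
    rw [ihφ a, ihψ a]
    have : posSet (.and φ ψ) a = posSet φ a ∩ posSet ψ a := by
      ext p
      constructor
      · rintro ⟨h, h1, h2⟩
        exact ⟨⟨h, h1⟩, ⟨h, h2⟩⟩
      · rintro ⟨⟨h, h1⟩, ⟨h', h2⟩⟩
        exact ⟨h, h1, h2⟩
    rw [this]
    constructor
    · rintro ⟨h1, h2⟩
      exact F.inter' _ h1 _ h2
    · intro h
      exact ⟨F.mono' _ h _ (posSet_upper _ _) Set.inter_subset_left,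
        F.mono' _ h _ (posSet_upper _ _) Set.inter_subset_right⟩
  | or φ ψ ihφ ihψ =>
    intro a
    show (_ ∨ _) ↔ _
    rw [ihφ a, ihψ a]
    have hu : posSet (.or φ ψ) a = posSet φ a ∪ posSet ψ a := by
      ext p
      constructor
      · rintro ⟨h, h1 | h2⟩
        · exact Or.inl ⟨h, h1⟩
        · exact Or.inr ⟨h, h2⟩
      · rintro (⟨h, h1⟩ | ⟨h, h2⟩)
        · exact ⟨h, Or.inl h1⟩
        · exact ⟨h, Or.inr h2⟩
    rw [hu]
    constructor
    · rintro (h | h)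
      · exact F.mono' _ h _ (IsUpperSet.union (posSet_upper _ _) (posSet_upper _ _))
          Set.subset_union_left
      · exact F.mono' _ h _ (IsUpperSet.union (posSet_upper _ _) (posSet_upper _ _))
          Set.subset_union_right
    · intro h
      exact hF.2 _ _ (posSet_upper _ _) (posSet_upper _ _) h
  | ex φ ih =>
    intro a
    show (∃ y, _) ↔ _
    constructor
    · rintro ⟨y, hy⟩
      have hsnoc : (fun i => (⟦Fin.snoc (α := fun _ => CompFam D F) a y.out i⟧ : FilterProd D F)) =
          Fin.snoc (fun i => (⟦a i⟧ : FilterProd D F)) y := by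
        funext i
        refine Fin.lastCases ?_ (fun j => ?_) i
        · rw [Fin.snoc_last, Fin.snoc_last, Quotient.out_eq]
        · rw [Fin.snoc_castSucc, Fin.snoc_castSucc]
      have := (ih (Fin.snoc a y.out)).1 (by rw [hsnoc]; exact hy)
      refine F.mono' _ this _ (posSet_upper _ _) ?_
      rintro p ⟨h, hr⟩
      refine ⟨fun i => snoc_dom_left h i, y.out.val p (snoc_dom_right h), ?_⟩
      rwa [snoc_val a y.out p h (fun i => snoc_dom_left h i) (snoc_dom_right h)] at hr
    · intro h
      obtain ⟨b, hb⟩ := ex_witness hX φ a h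
      refine ⟨⟦b⟧, ?_⟩
      have hsnoc : (fun i => (⟦Fin.snoc (α := fun _ => CompFam D F) a b i⟧ : FilterProd D F)) =
          Fin.snoc (fun i => (⟦a i⟧ : FilterProd D F)) ⟦b⟧ := by
        funext i
        refine Fin.lastCases ?_ (fun j => ?_) i
        · rw [Fin.snoc_last, Fin.snoc_last]
        · rw [Fin.snoc_castSucc, Fin.snoc_castSucc]
      rw [← hsnoc]
      exact (ih (Fin.snoc a b)).2 hb

/-- H-inductive sentences persist in prime products. -/
theorem stmt11 (hX : IsWellFoundedForest X) (D : OrderedSystem L X M) (F : PosetFilter X)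
    (hF : F.Prime) (φs : List (BasicHInd L))
    (h : ∀ p : X, ∀ ψ ∈ φs, BasicHInd.Realize ψ (M p)) :
    ∀ ψ ∈ φs, BasicHInd.Realize ψ (FilterProd D F) := by
  intro ψ hψ xs hl
  have hx : xs = fun i => (⟦(xs i).out⟧ : FilterProd D F) :=
    funext fun i => (Quotient.out_eq _).symm
  set a : Fin ψ.n → CompFam D F := fun i => (xs i).out with ha
  have hl' : PosFormula.Realize ψ.lhs Empty.elim (fun i => (⟦a i⟧ : FilterProd D F)) := by
    rw [hx] at hl; exact hl
  have hmem := (los hX hF ψ.lhs a).1 hl'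
  have hr : posSet ψ.rhs a ∈ F.sets := by
    refine F.mono' _ hmem _ (posSet_upper _ _) ?_
    rintro p ⟨hd, hreal⟩
    exact ⟨hd, h p ψ hψ _ hreal⟩
  have := (los hX hF ψ.rhs a).2 hr
  rw [hx]
  exact this

end PosLogic
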